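/- Let X be an infinite-dimensional real Banach space and let (A_n) be an approximation scheme in X. The following are equivalent: (i) (X,(A_n)) does not satisfy Shapiro's Theorem; (ii) there exists a finite-codimensional linear subspace Y of X and a sequence (c_n) of positive reals with c_n → ∞ such that E(y, A_n) ≤ ‖y‖/c_n for all y ∈ Y and all n; (iii) for every linear subspace Y of X there exists a sequence (c_n) of positive reals with c_n → ∞ such that E(y, A_n) ≤ ‖y‖/c_n for all y ∈ Y and all n. -/

import Mathlib

open Metric Filter

/-- `(A n)` together with the map `K` is an approximation scheme in `X`. -/
structure IsApproximationScheme {X : Type*} [NormedAddCommGroup X] [NormedSpace ℝ X]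
    (A : ℕ → Set X) (K : ℕ → ℕ) : Prop where
  subset_succ : ∀ n, A n ⊆ A (n + 1)
  ne_succ : ∀ n, A n ≠ A (n + 1)
  le_K : ∀ n, n ≤ K n
  add_mem : ∀ n, ∀ x ∈ A n, ∀ y ∈ A n, x + y ∈ A (K n)
  smul_mem : ∀ n (c : ℝ), ∀ x ∈ A n, c • x ∈ A n
  dense_union : Dense (⋃ n, A n)

/-- `(X, (A n))` satisfies Shapiro's Theorem: for every nonincreasing positive sequence
`ε` converging to `0` there is `x` with `E(x, A n) ≠ O(ε n)`. -/
def SatisfiesShapiro {X : Type*} [NormedAddCommGroup X] (A : ℕ → Set X) : Prop :=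
  ∀ ε : ℕ → ℝ, (∀ n, 0 < ε n) → Antitone ε → Tendsto ε atTop (nhds 0) →
    ∃ x : X, ¬ ∃ M : ℝ, ∀ n, infDist x (A n) ≤ M * ε n

/-- `E(B, A) = sup_{b ∈ B} E(b, A)`. -/
noncomputable def setApproxError {X : Type*} [NormedAddCommGroup X] (B A : Set X) : ℝ :=
  ⨆ b : B, infDist (b : X) A

/-- `dens_n`-style quantity: `E(S(X), A) = sup_{‖x‖ = 1} E(x, A)`. -/
noncomputable def sphDist {X : Type*} [NormedAddCommGroup X] (A : Set X) : ℝ :=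
  ⨆ x : {x : X // ‖x‖ = 1}, infDist (x : X) A

namespace ShapiroAux

variable {X : Type*} [NormedAddCommGroup X] [NormedSpace ℝ X]
  {A : ℕ → Set X} {K : ℕ → ℕ}

lemma mono (hA : IsApproximationScheme A K) : ∀ {k m : ℕ}, k ≤ m → A k ⊆ A m := by
  intro k m h
  induction h with
  | refl => exact subset_rfl
  | step h ih => exact ih.trans (hA.subset_succ _)

lemma zero_mem (hA : IsApproximationScheme A K) {n : ℕ} (h : (A n).Nonempty) :
    (0 : X) ∈ A n := by
  obtain ⟨a, ha⟩ := h
  simpa using hA.smul_mem n 0 a ha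

lemma exists_nonempty (hA : IsApproximationScheme A K) : ∃ n, (A n).Nonempty := by
  by_contra h
  push_neg at h
  have h0 : (0 : X) ∈ closure (⋃ n, A n) := hA.dense_union 0
  have : (⋃ n, A n) = (∅ : Set X) := by
    simp only [Set.iUnion_eq_empty]
    intro n; exact h n
  rw [this, closure_empty] at h0
  exact h0

lemma E_le_norm (hA : IsApproximationScheme A K) (x : X) (n : ℕ) :
    infDist x (A n) ≤ ‖x‖ := by
  rcases Set.eq_empty_or_nonempty (A n) with h | h
  · simp [h, infDist_empty, norm_nonneg]
  · simpa [dist_zero_right] using infDist_le_dist_of_mem (x := x) (zero_mem hA h)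

lemma E_smul (hA : IsApproximationScheme A K) (t : ℝ) (x : X) (n : ℕ) :
    infDist (t • x) (A n) ≤ |t| * infDist x (A n) := by
  rcases Set.eq_empty_or_nonempty (A n) with h | h
  · simp [h, infDist_empty]
  · refine le_of_forall_pos_le_add ?_
    intro e he
    obtain ⟨a, ha, hd⟩ := (infDist_lt_iff h).1
      (lt_add_of_pos_right (infDist x (A n)) (by positivity : (0:ℝ) < e / (|t| + 1)))
    have habs : (0:ℝ) ≤ |t| := abs_nonneg t
    calc infDist (t • x) (A n) ≤ dist (t • x) (t • a) :=
          infDist_le_dist_of_mem (hA.smul_mem n t a ha)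
      _ = |t| * dist x a := by rw [dist_smul₀, Real.norm_eq_abs]
      _ ≤ |t| * (infDist x (A n) + e / (|t| + 1)) :=
          mul_le_mul_of_nonneg_left hd.le habs
      _ ≤ |t| * infDist x (A n) + e := by
          rw [mul_add]
          have h1 : |t| * (e / (|t| + 1)) ≤ e := by
            rw [mul_div_assoc']
            rw [div_le_iff₀ (by positivity : (0:ℝ) < |t| + 1)]
            nlinarith
          linarith

lemma E_add (hA : IsApproximationScheme A K) {n : ℕ} (h : (A n).Nonempty) (u v : X) :
    infDist (u + v) (A (K n)) ≤ infDist u (A n) + infDist v (A n) := by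
  refine le_of_forall_pos_le_add ?_
  intro e he
  obtain ⟨a, ha, hda⟩ := (infDist_lt_iff h).1
    (lt_add_of_pos_right (infDist u (A n)) (half_pos he))
  obtain ⟨b, hb, hdb⟩ := (infDist_lt_iff h).1
    (lt_add_of_pos_right (infDist v (A n)) (half_pos he))
  calc infDist (u + v) (A (K n)) ≤ dist (u + v) (a + b) :=
        infDist_le_dist_of_mem (hA.add_mem n a ha b hb)
    _ ≤ dist u a + dist v b := dist_add_add_le u v a b
    _ ≤ infDist u (A n) + infDist v (A n) + e := by linarith

lemma tendsto_E (hA : IsApproximationScheme A K) (x : X) :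
    Tendsto (fun n => infDist x (A n)) atTop (nhds 0) := by
  rw [Metric.tendsto_atTop]
  intro e he
  obtain ⟨a, ha, hd⟩ := Metric.mem_closure_iff.1 (hA.dense_union x) e he
  obtain ⟨m, ham⟩ := Set.mem_iUnion.1 ha
  refine ⟨m, fun n hn => ?_⟩
  rw [Real.dist_eq, sub_zero, abs_of_nonneg infDist_nonneg]
  exact lt_of_le_of_lt (infDist_le_dist_of_mem (mono hA hn ham)) hd

end ShapiroAux

namespace ShapiroAux

variable {X : Type*} [NormedAddCommGroup X] [NormedSpace ℝ X]
  {A : ℕ → Set X} {K : ℕ → ℕ}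

lemma transfer (hA : IsApproximationScheme A K) (η : ℕ → ℝ) (hpos : ∀ n, 0 < η n)
    (h0 : Tendsto η atTop (nhds 0)) (C : ℝ) (hC : 0 < C)
    (H : ∀ n, (A n).Nonempty → ∀ x : X, infDist x (A (K n)) ≤ C * ‖x‖ * η n) :
    ∃ ε : ℕ → ℝ, (∀ m, 0 < ε m) ∧ Antitone ε ∧ Tendsto ε atTop (nhds 0) ∧
      ∀ (x : X) (m : ℕ), infDist x (A m) ≤ max 1 C * ‖x‖ * ε m := by
  classical
  obtain ⟨n₁, hn₁⟩ := exists_nonempty hA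
  set S : ℕ → Set ℕ := fun m => {n | K n ≤ m ∧ (A n).Nonempty} with hS
  have hbdd : ∀ m, BddAbove (S m) := by
    intro m
    exact ⟨m, fun n hn => le_trans (hA.le_K n) hn.1⟩
  set d : ℕ → ℝ := fun m => if (S m).Nonempty then min 1 (η (sSup (S m))) else 1 with hd
  have hdpos : ∀ m, 0 < d m := by
    intro m
    by_cases h : (S m).Nonempty
    · simp only [hd, if_pos h]
      exact lt_min one_pos (hpos _)
    · simp only [hd, if_neg h]; exact one_pos
  have key : ∀ (x : X) (k m : ℕ), k ≤ m → infDist x (A m) ≤ max 1 C * ‖x‖ * d k := by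
    intro x k m hkm
    have hnorm : infDist x (A m) ≤ ‖x‖ := E_le_norm hA x m
    have hxC : ‖x‖ ≤ max 1 C * ‖x‖ := by
      nlinarith [norm_nonneg x, le_max_left 1 C]
    by_cases h : (S k).Nonempty
    · have hmem : sSup (S k) ∈ S k := Nat.sSup_mem h (hbdd k)
      set n := sSup (S k)
      have hKn : K n ≤ m := le_trans hmem.1 hkm
      have hAKn : (A (K n)).Nonempty := hmem.2.mono (mono hA (hA.le_K n))
      have h1 : infDist x (A m) ≤ C * ‖x‖ * η n :=
        le_trans (infDist_le_infDist_of_subset (mono hA hKn) hAKn) (H n hmem.2 x)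
      simp only [hd, if_pos h]
      rcases le_total (η n) 1 with hle | hle
      · rw [min_eq_right hle]
        calc infDist x (A m) ≤ C * ‖x‖ * η n := h1
          _ ≤ max 1 C * ‖x‖ * η n :=
              mul_le_mul_of_nonneg_right
                (mul_le_mul_of_nonneg_right (le_max_right 1 C) (norm_nonneg x)) (hpos n).le
      · rw [min_eq_left hle]
        simpa using hnorm.trans hxC
    · simp only [hd, if_neg h]
      simpa using hnorm.trans hxC
  set ε : ℕ → ℝ := fun m => (Finset.range (m + 1)).inf' ⟨0, Finset.mem_range.2 (Nat.succ_pos m)⟩ d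
    with hε
  have hεd : ∀ m, ∃ k ≤ m, ε m = d k := by
    intro m
    obtain ⟨k, hk, hk'⟩ := Finset.exists_mem_eq_inf'
      (⟨0, Finset.mem_range.2 (Nat.succ_pos m)⟩ : (Finset.range (m+1)).Nonempty) d
    exact ⟨k, Nat.lt_succ_iff.1 (Finset.mem_range.1 hk), hk'⟩
  have hεpos : ∀ m, 0 < ε m := by
    intro m; obtain ⟨k, _, hk⟩ := hεd m; rw [hk]; exact hdpos k
  have hεle : ∀ k m, k ≤ m → ε m ≤ d k := by
    intro k m hkm
    exact Finset.inf'_le d (Finset.mem_range.2 (Nat.lt_succ_of_le hkm))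
  have hanti : Antitone ε := by
    intro m m' hmm'
    obtain ⟨k, hk, hk'⟩ := hεd m
    rw [hk']
    exact hεle k m' (hk.trans hmm')
  have hφ : Tendsto (fun m => sSup (S m)) atTop atTop := by
    rw [tendsto_atTop_atTop]
    intro b
    refine ⟨K (max b n₁), fun a ha => ?_⟩
    have hmem : max b n₁ ∈ S a :=
      ⟨le_trans (le_refl _) ha, hn₁.mono (mono hA (le_max_right b n₁))⟩
    exact le_trans (le_max_left b n₁) (le_csSup (hbdd a) hmem)
  have hdtend : Tendsto d atTop (nhds 0) := by
    refine squeeze_zero' (Eventually.of_forall fun m => (hdpos m).le) ?_ (h0.comp hφ)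
    filter_upwards [eventually_ge_atTop (K n₁)] with m hm
    have hSm : (S m).Nonempty := ⟨n₁, hm, hn₁⟩
    simp only [hd, if_pos hSm, Function.comp]
    exact min_le_right _ _
  have hεtend : Tendsto ε atTop (nhds 0) :=
    squeeze_zero' (Eventually.of_forall fun m => (hεpos m).le)
      (Eventually.of_forall fun m => hεle m m le_rfl) hdtend
  refine ⟨ε, hεpos, hanti, hεtend, fun x m => ?_⟩
  obtain ⟨k, hk, hk'⟩ := hεd m
  rw [hk']
  exact key x k m hk

end ShapiroAux

namespace ShapiroAux

variable {X : Type*} [NormedAddCommGroup X] [NormedSpace ℝ X]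
  {A : ℕ → Set X} {K : ℕ → ℕ}

/-- Baire category: failure of Shapiro's theorem gives a uniform bound. -/
lemma uniform_of_not [CompleteSpace X] (hA : IsApproximationScheme A K)
    (h : ¬ SatisfiesShapiro A) :
    ∃ ε : ℕ → ℝ, (∀ m, 0 < ε m) ∧ Antitone ε ∧ Tendsto ε atTop (nhds 0) ∧
      ∃ C : ℝ, 0 < C ∧ ∀ (x : X) (m : ℕ), infDist x (A m) ≤ C * ‖x‖ * ε m := by
  unfold SatisfiesShapiro at h
  push_neg at h
  obtain ⟨ε, hpos, hanti, h0, hall⟩ := h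
  -- Baire category argument
  haveI : Nonempty X := ⟨0⟩
  set F : ℕ → Set X := fun M => {x | ∀ n, infDist x (A n) ≤ (M : ℝ) * ε n} with hF
  have hclosed : ∀ M, IsClosed (F M) := by
    intro M
    have : F M = ⋂ n, {x | infDist x (A n) ≤ (M : ℝ) * ε n} := by
      ext x; simp [hF, Set.mem_iInter]
    rw [this]
    exact isClosed_iInter fun n => isClosed_le (continuous_infDist_pt _) continuous_const
  have hcover : ⋃ M, F M = Set.univ := by
    rw [Set.eq_univ_iff_forall]
    intro x
    obtain ⟨M, hM⟩ := hall x
    refine Set.mem_iUnion.2 ⟨⌈M⌉₊, fun n => ?_⟩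
    exact (hM n).trans (mul_le_mul_of_nonneg_right (Nat.le_ceil M) (hpos n).le)
  obtain ⟨M, hint⟩ := nonempty_interior_of_iUnion_of_closed hclosed hcover
  obtain ⟨x₀, hx₀⟩ := hint
  obtain ⟨r, hr, hball⟩ := Metric.isOpen_iff.1 isOpen_interior x₀ hx₀
  have hballF : ball x₀ r ⊆ F M := hball.trans interior_subset
  have hx₀F : x₀ ∈ F M := hballF (mem_ball_self hr)
  have key1 : ∀ y : X, ‖y‖ < r → ∀ n, (A n).Nonempty →
      infDist y (A (K n)) ≤ 2 * M * ε n := by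
    intro y hy n hne
    have hmem : x₀ + y ∈ ball x₀ r := by
      rw [mem_ball, dist_eq_norm, add_sub_cancel_left]; exact hy
    have h1 : infDist (x₀ + y) (A n) ≤ M * ε n := hballF hmem n
    have h2 : infDist (-x₀) (A n) ≤ M * ε n := by
      calc infDist (-x₀) (A n) = infDist ((-1 : ℝ) • x₀) (A n) := by rw [neg_one_smul]
        _ ≤ |(-1 : ℝ)| * infDist x₀ (A n) := E_smul hA _ _ _
        _ = infDist x₀ (A n) := by simp
        _ ≤ M * ε n := hx₀F n
    calc infDist y (A (K n)) = infDist ((x₀ + y) + (-x₀)) (A (K n)) := by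
          congr 1; abel
      _ ≤ infDist (x₀ + y) (A n) + infDist (-x₀) (A n) := E_add hA hne _ _
      _ ≤ 2 * M * ε n := by linarith
  set C : ℝ := max 1 (4 * M / r) with hC
  have hC1 : (1 : ℝ) ≤ C := le_max_left _ _
  have key2 : ∀ n, (A n).Nonempty → ∀ y : X, infDist y (A (K n)) ≤ C * ‖y‖ * ε n := by
    intro n hne y
    rcases eq_or_ne y 0 with rfl | hy0
    · have h0' : (0 : X) ∈ A (K n) := zero_mem hA (hne.mono (mono hA (hA.le_K n)))
      rw [infDist_zero_of_mem h0']
      have : (0:ℝ) ≤ C * ‖(0:X)‖ * ε n := by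
        apply mul_nonneg (mul_nonneg (by linarith) (norm_nonneg _)) (hpos n).le
      exact this
    · have hny : 0 < ‖y‖ := norm_pos_iff.2 hy0
      set t : ℝ := r / (2 * ‖y‖) with ht
      have htpos : 0 < t := by positivity
      have htn : ‖t • y‖ < r := by
        rw [norm_smul, Real.norm_eq_abs, abs_of_pos htpos, ht]
        rw [div_mul_eq_mul_div, mul_comm]
        rw [div_lt_iff₀ (by positivity)]
        nlinarith
      have h1 : infDist (t • y) (A (K n)) ≤ 2 * M * ε n := key1 _ htn n hne
      have h2 : infDist y (A (K n)) ≤ t⁻¹ * (2 * M * ε n) := by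
        calc infDist y (A (K n)) = infDist (t⁻¹ • t • y) (A (K n)) := by
              rw [inv_smul_smul₀ (ne_of_gt htpos)]
          _ ≤ |t⁻¹| * infDist (t • y) (A (K n)) := E_smul hA _ _ _
          _ ≤ t⁻¹ * (2 * M * ε n) := by
              rw [abs_of_pos (inv_pos.2 htpos)]
              exact mul_le_mul_of_nonneg_left h1 (inv_pos.2 htpos).le
      have hti : t⁻¹ = 2 * ‖y‖ / r := by
        rw [ht, inv_div, mul_comm]
      have h3 : t⁻¹ * (2 * M * ε n) = (4 * M / r) * ‖y‖ * ε n := by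
        rw [hti]; field_simp; ring
      refine h2.trans ?_
      rw [h3]
      exact mul_le_mul_of_nonneg_right
        (mul_le_mul_of_nonneg_right (le_max_right 1 (4 * M / r)) (norm_nonneg y)) (hpos n).le
  obtain ⟨ε', h1, h2, h3, h4⟩ := transfer hA ε hpos h0 C (by linarith) key2
  exact ⟨ε', h1, h2, h3, max 1 C, by positivity, h4⟩

lemma not_shapiro_of_uniform (ε : ℕ → ℝ) (hpos : ∀ m, 0 < ε m) (hanti : Antitone ε)
    (h0 : Tendsto ε atTop (nhds 0)) (C : ℝ)
    (hb : ∀ (x : X) (m : ℕ), infDist x (A m) ≤ C * ‖x‖ * ε m) :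
    ¬ SatisfiesShapiro A := by
  intro hS
  obtain ⟨x, hx⟩ := hS ε hpos hanti h0
  exact hx ⟨C * ‖x‖, hb x⟩

lemma c_of_uniform (ε : ℕ → ℝ) (hpos : ∀ m, 0 < ε m)
    (h0 : Tendsto ε atTop (nhds 0)) (C : ℝ) (hC : 0 < C)
    (hb : ∀ (x : X) (m : ℕ), infDist x (A m) ≤ C * ‖x‖ * ε m) :
    ∃ c : ℕ → ℝ, (∀ n, 0 < c n) ∧ Tendsto c atTop atTop ∧
      ∀ (x : X) (n : ℕ), infDist x (A n) ≤ ‖x‖ / c n := by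
  refine ⟨fun n => (C * ε n)⁻¹, fun n => by have := hpos n; positivity, ?_, ?_⟩
  · have h1 : Tendsto (fun n => C * ε n) atTop (nhdsWithin 0 (Set.Ioi 0)) := by
      rw [tendsto_nhdsWithin_iff]
      constructor
      · simpa using h0.const_mul C
      · exact Eventually.of_forall fun n => Set.mem_Ioi.2 (mul_pos hC (hpos n))
    exact h1.inv_tendsto_nhdsGT_zero
  · intro x n
    show infDist x (A n) ≤ ‖x‖ / (C * ε n)⁻¹
    rw [div_eq_mul_inv, inv_inv]
    calc infDist x (A n) ≤ C * ‖x‖ * ε n := hb x n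
      _ = ‖x‖ * (C * ε n) := by ring

end ShapiroAux

namespace ShapiroAux

variable {X : Type*} [NormedAddCommGroup X] [NormedSpace ℝ X]
  {A : ℕ → Set X} {K : ℕ → ℕ}

lemma uniform_of_codim [CompleteSpace X] (hA : IsApproximationScheme A K)
    (Y : Submodule ℝ X) (fd : FiniteDimensional ℝ (X ⧸ Y)) (c : ℕ → ℝ)
    (hcpos : ∀ n, 0 < c n) (hct : Tendsto c atTop atTop)
    (hb : ∀ y ∈ Y, ∀ n : ℕ, infDist y (A n) ≤ ‖y‖ / c n) :
    ∃ ε : ℕ → ℝ, (∀ m, 0 < ε m) ∧ Antitone ε ∧ Tendsto ε atTop (nhds 0) ∧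
      ∃ C : ℝ, 0 < C ∧ ∀ (x : X) (m : ℕ), infDist x (A m) ≤ C * ‖x‖ * ε m := by
  -- pass to the closure of Y
  set Z := Y.topologicalClosure with hZ
  have hZb : ∀ y ∈ Z, ∀ n : ℕ, infDist y (A n) ≤ ‖y‖ / c n := by
    intro y hy n
    have hcl : IsClosed {v : X | infDist v (A n) ≤ ‖v‖ / c n} :=
      isClosed_le (continuous_infDist_pt _) (continuous_norm.div_const _)
    have hsub : (Y : Set X) ⊆ {v : X | infDist v (A n) ≤ ‖v‖ / c n} :=
      fun v hv => hb v hv n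
    have hy' : y ∈ closure (Y : Set X) := by
      rwa [← Submodule.topologicalClosure_coe]
    exact closure_minimal hsub hcl hy'
  haveI fdZ : FiniteDimensional ℝ (X ⧸ Z) := by
    have hle : Y ≤ Submodule.comap (LinearMap.id : X →ₗ[ℝ] X) Z :=
      fun x hx => Submodule.le_topologicalClosure Y hx
    have hsurj : Function.Surjective (Y.mapQ Z LinearMap.id hle) := by
      intro z
      obtain ⟨x, rfl⟩ := Z.mkQ_surjective z
      exact ⟨Y.mkQ x, by rw [Submodule.mkQ_apply, Submodule.mapQ_apply]; rfl⟩
    exact Module.Finite.of_surjective _ hsurj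
  have hZclosed : IsClosed (Z : Set X) := Y.isClosed_topologicalClosure
  obtain ⟨P, hP⟩ := Submodule.ClosedComplemented.of_quotient_finiteDimensional hZclosed
  set π : X →L[ℝ] X := Z.subtypeL.comp P with hπ
  have hπZ : ∀ x : X, π x ∈ Z := fun x => (P x).2
  have hπid : ∀ y ∈ Z, π y = y := by
    intro y hy
    show ((P y : Z) : X) = y
    have := hP ⟨y, hy⟩
    rw [show y = ((⟨y, hy⟩ : Z) : X) from rfl, this]
  set ρℓ : X →ₗ[ℝ] X := ((ContinuousLinearMap.id ℝ X - π : X →L[ℝ] X) : X →ₗ[ℝ] X) with hρ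
  have hρapp : ∀ x : X, ρℓ x = x - π x := fun x => rfl
  set G : Submodule ℝ X := LinearMap.range ρℓ with hG
  haveI fdG : FiniteDimensional ℝ G := by
    have hker : Z ≤ LinearMap.ker ρℓ := by
      intro y hy
      rw [LinearMap.mem_ker, hρapp, hπid y hy, sub_self]
    have hrange : LinearMap.range (Z.liftQ ρℓ hker) = G := Submodule.range_liftQ _ _ _
    exact hrange ▸ (Z.liftQ ρℓ hker).finiteDimensional_range
  have hρG : ∀ x : X, x - π x ∈ G := fun x => ⟨x, rfl⟩
  -- compact unit ball of G
  haveI : ProperSpace G := FiniteDimensional.proper ℝ G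
  set Kc : Set X := Subtype.val '' (closedBall (0 : G) 1) with hKc
  have hKcomp : IsCompact Kc := (isCompact_closedBall (0 : G) 1).image continuous_subtype_val
  have hK0 : (0 : X) ∈ Kc := ⟨0, mem_closedBall_self zero_le_one, rfl⟩
  have hKne : Kc.Nonempty := ⟨0, hK0⟩
  -- the sup of approximation errors over Kc
  set δ : ℕ → ℝ := fun n => sSup ((fun v : X => infDist v (A n)) '' Kc) with hδ
  have hbddδ : ∀ n, BddAbove ((fun v : X => infDist v (A n)) '' Kc) :=
    fun n => hKcomp.bddAbove_image ((continuous_infDist_pt _).continuousOn)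
  have hδub : ∀ n, ∀ v ∈ Kc, infDist v (A n) ≤ δ n :=
    fun n v hv => le_csSup (hbddδ n) (Set.mem_image_of_mem _ hv)
  have hδ0 : ∀ n, 0 ≤ δ n := fun n => le_trans infDist_nonneg (hδub n 0 hK0)
  have hδtend : Tendsto δ atTop (nhds 0) := by
    rw [Metric.tendsto_atTop]
    intro e he
    obtain ⟨t, htK, htcov⟩ := hKcomp.elim_nhds_subcover (fun v => ball v (e / 3))
      (fun v _ => ball_mem_nhds v (by positivity))
    have hev : ∀ᶠ n in atTop, ∀ v ∈ t, infDist v (A n) < e / 3 :=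
      (eventually_all_finset t).2 fun v _ =>
        (tendsto_E hA v).eventually_lt_const (by positivity)
    obtain ⟨N, hN⟩ := eventually_atTop.1 hev
    refine ⟨N, fun n hn => ?_⟩
    have hsup : δ n ≤ 2 * e / 3 := by
      refine csSup_le (hKne.image _) ?_
      rintro r ⟨v, hv, rfl⟩
      obtain ⟨w, hw, hvw⟩ := Set.mem_iUnion₂.1 (htcov hv)
      have h1 : infDist v (A n) ≤ infDist w (A n) + dist v w := infDist_le_infDist_add_dist
      have h2 : infDist w (A n) < e / 3 := hN n hn w hw
      have h3 : dist v w < e / 3 := mem_ball.1 hvw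
      linarith
    rw [Real.dist_eq, sub_zero, abs_of_nonneg (hδ0 n)]
    linarith
  have hGδ : ∀ v ∈ G, ∀ n : ℕ, infDist v (A n) ≤ δ n * ‖v‖ := by
    intro v hv n
    rcases eq_or_ne v 0 with rfl | hv0
    · have : infDist (0 : X) (A n) = 0 := by
        rcases Set.eq_empty_or_nonempty (A n) with h | h
        · simp [h]
        · exact infDist_zero_of_mem (zero_mem hA h)
      simp [this]
    · have hnv : 0 < ‖v‖ := norm_pos_iff.2 hv0
      set u : X := ‖v‖⁻¹ • v with hu
      have huG : u ∈ G := G.smul_mem _ hv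
      have hun : ‖u‖ = 1 := by
        rw [hu, norm_smul, Real.norm_eq_abs, abs_of_pos (inv_pos.2 hnv),
          inv_mul_cancel₀ (ne_of_gt hnv)]
      have huK : u ∈ Kc := by
        refine ⟨⟨u, huG⟩, ?_, rfl⟩
        rw [mem_closedBall, dist_zero_right]
        show ‖u‖ ≤ 1
        rw [hun]
      calc infDist v (A n) = infDist (‖v‖ • u) (A n) := by
            rw [hu, smul_smul, mul_inv_cancel₀ (ne_of_gt hnv), one_smul]
        _ ≤ |‖v‖| * infDist u (A n) := E_smul hA _ _ _
        _ = ‖v‖ * infDist u (A n) := by rw [abs_of_pos hnv]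
        _ ≤ ‖v‖ * δ n := mul_le_mul_of_nonneg_left (hδub n u huK) hnv.le
        _ = δ n * ‖v‖ := mul_comm _ _
  -- the combined bound
  set C : ℝ := 1 + ‖π‖ with hCdef
  have hC : 0 < C := by have := norm_nonneg π; linarith
  set η : ℕ → ℝ := fun n => 1 / c n + δ n with hη
  have hηpos : ∀ n, 0 < η n := fun n => by
    have h1 : 0 < 1 / c n := div_pos one_pos (hcpos n)
    have := hδ0 n; simp only [hη]; linarith
  have hηtend : Tendsto η atTop (nhds 0) := by
    have h1 : Tendsto (fun n => 1 / c n) atTop (nhds 0) := by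
      simpa only [one_div] using (show Tendsto (fun n => (c n)⁻¹) atTop (nhds 0) from hct.inv_tendsto_atTop)
    have h2 := h1.add hδtend
    rw [add_zero] at h2
    simp only [hη]
    exact h2
  have H : ∀ n, (A n).Nonempty → ∀ x : X, infDist x (A (K n)) ≤ C * ‖x‖ * η n := by
    intro n hne x
    have hπn : ‖π x‖ ≤ ‖π‖ * ‖x‖ := π.le_opNorm x
    have hρn : ‖x - π x‖ ≤ C * ‖x‖ := by
      have := norm_sub_le x (π x)
      simp only [hCdef]; nlinarith [norm_nonneg x]
    have h1 : infDist (π x) (A n) ≤ ‖π x‖ / c n := hZb _ (hπZ x) n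
    have h2 : infDist (x - π x) (A n) ≤ δ n * ‖x - π x‖ := hGδ _ (hρG x) n
    calc infDist x (A (K n)) = infDist (π x + (x - π x)) (A (K n)) := by
          congr 1; abel
      _ ≤ infDist (π x) (A n) + infDist (x - π x) (A n) := E_add hA hne _ _
      _ ≤ ‖π x‖ / c n + δ n * ‖x - π x‖ := add_le_add h1 h2
      _ ≤ (C * ‖x‖) / c n + δ n * (C * ‖x‖) := by
          have hπC : ‖π x‖ ≤ C * ‖x‖ := by nlinarith [norm_nonneg x]
          have hc := hcpos n
          have hd := hδ0 n
          gcongr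
      _ = C * ‖x‖ * η n := by simp only [hη]; ring
  obtain ⟨ε, h1, h2, h3, h4⟩ := transfer hA η hηpos hηtend C hC H
  exact ⟨ε, h1, h2, h3, max 1 C, by positivity, h4⟩

end ShapiroAux

theorem stmt13 {X : Type*} [NormedAddCommGroup X] [NormedSpace ℝ X] [CompleteSpace X]
    (hX : ¬ FiniteDimensional ℝ X) (A : ℕ → Set X) (K : ℕ → ℕ)
    (hA : IsApproximationScheme A K) :
    (¬ SatisfiesShapiro A ↔
      ∃ Y : Submodule ℝ X, FiniteDimensional ℝ (X ⧸ Y) ∧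
        ∃ c : ℕ → ℝ, (∀ n, 0 < c n) ∧ Tendsto c atTop atTop ∧
          ∀ y ∈ Y, ∀ n : ℕ, infDist y (A n) ≤ ‖y‖ / c n) ∧
    (¬ SatisfiesShapiro A ↔
      ∀ Y : Submodule ℝ X, ∃ c : ℕ → ℝ, (∀ n, 0 < c n) ∧ Tendsto c atTop atTop ∧
        ∀ y ∈ Y, ∀ n : ℕ, infDist y (A n) ≤ ‖y‖ / c n) := by
  have fdTop : FiniteDimensional ℝ (X ⧸ (⊤ : Submodule ℝ X)) := by
    have hsub : Subsingleton (X ⧸ (⊤ : Submodule ℝ X)) :=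
      Submodule.Quotient.subsingleton_iff.2 rfl
    exact Module.Finite.of_surjective (0 : (⊥ : Submodule ℝ X) →ₗ[ℝ] _)
      (fun x => ⟨0, Subsingleton.elim _ _⟩)
  have dir1 : ¬ SatisfiesShapiro A → ∃ c : ℕ → ℝ, (∀ n, 0 < c n) ∧
      Tendsto c atTop atTop ∧ ∀ (x : X) (n : ℕ), infDist x (A n) ≤ ‖x‖ / c n := by
    intro h
    obtain ⟨ε, hp, ha, h0, C, hC, hb⟩ := ShapiroAux.uniform_of_not hA h
    exact ShapiroAux.c_of_uniform ε hp h0 C hC hb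
  have dir2 : (∃ Y : Submodule ℝ X, FiniteDimensional ℝ (X ⧸ Y) ∧
      ∃ c : ℕ → ℝ, (∀ n, 0 < c n) ∧ Tendsto c atTop atTop ∧
        ∀ y ∈ Y, ∀ n : ℕ, infDist y (A n) ≤ ‖y‖ / c n) → ¬ SatisfiesShapiro A := by
    rintro ⟨Y, fd, c, hp, ht, hb⟩
    obtain ⟨ε, h1, h2, h3, C, hC, h4⟩ := ShapiroAux.uniform_of_codim hA Y fd c hp ht hb
    exact ShapiroAux.not_shapiro_of_uniform ε h1 h2 h3 C h4
  refine ⟨⟨fun h => ?_, dir2⟩, ⟨fun h Y => ?_, fun h => ?_⟩⟩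
  · obtain ⟨c, h1, h2, h3⟩ := dir1 h
    exact ⟨⊤, fdTop, c, h1, h2, fun y _ n => h3 y n⟩
  · obtain ⟨c, h1, h2, h3⟩ := dir1 h
    exact ⟨c, h1, h2, fun y _ n => h3 y n⟩
  · obtain ⟨c, h1, h2, h3⟩ := h ⊤
    exact dir2 ⟨⊤, fdTop, c, h1, h2, h3⟩
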